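/- Fix k ≥ 1 and let p, q ∈ ℤ. Then the following eight identities hold: (1) ∂_0(c^{-1}_p·a^0_q) = 2(a^1_{p-1}·c^2_q + a^1_p·c^2_{q-1}) - 2a^1_{p-1}·a^1_q; (2) ∂_0(c^{-1}_p·f̃^0_k) = 2(a^1_{p-1}·c^2_k + a^1_p·c^2_{k-1}) - 2a^1_{p-1}·f^1_k; (3) ∂_0(ĉ^{-1}_{k+1}·a^0_q) = 2(f̃^1_k·c^2_q + a^1_{k+1}·c^2_{q-1}) - 2f̃^1_k·a^1_q; (4) ∂_0(ĉ^{-1}_{k+1}·f̃^0_k) = 2(f̃^1_k·c^2_k + a^1_{k+1}·c^2_{k-1}) - 2f̃^1_k·f^1_k; (5) ∂_1(c^{-1}_p·a^1_q) = 2(a^0_{p-1}·c^2_q + a^0_p·c^2_{q-1}) - 2a^0_{p-1}·a^0_q; (6) ∂_1(c^{-1}_p·f^1_k) = 2(a^0_{p-1}·c^2_k + a^0_p·c^2_{k-1}) - 2a^0_{p-1}·f̃_k; (7) ∂_1(ĉ^{-1}_{k+1}·a^1_q) = 2(f^0_k·c^2_q + a^0_{k+1}·c^2_{q-1}) - 2f_k·a^0_q;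 (8) ∂_1(ĉ^{-1}_{k+1}·f^1_k) = 2(f^0_k·c^2_k + a^0_{k+1}·c^2_{k-1}) - 2f_k·f̃_k. -/
import Mathlib


/-!
The polynomial ring `R2 = ℚ[c₁, c₂, …, t₁, t₂, …, f_k]`: the variable `Sum.inl p`
(for `p ≥ 1`) is `c_p`, `Sum.inr i` (for `i ≥ 1`) is `t_i`, and `Sum.inl 0` is the
adjoined variable `f_k`.
-/

noncomputable section
open MvPolynomial Finset
open scoped Classical

abbrev R2 : Type := MvPolynomial (ℕ ⊕ ℕ) ℚ

/-- The variable `t_i`. -/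
def Tv (i : ℕ) : R2 := X (Sum.inr i)

/-- The adjoined variable `f_k`. -/
def fk : R2 := X (Sum.inl 0)

/-- `c_p`, with the conventions `c_0 = 1` and `c_p = 0` for `p < 0`. -/
def Cv (p : ℤ) : R2 := if p < 0 then 0 else if p = 0 then 1 else X (Sum.inl p.toNat)

/-- The complete homogeneous symmetric polynomial `h_j` evaluated on a list. -/
def hfun : List R2 → ℕ → R2
  | [], j => if j = 0 then 1 else 0
  | a :: L, j => ∑ i ∈ Finset.range (j + 1), a ^ i * hfun L (j - i)

/-- The elementary symmetric polynomial `e_j` evaluated on a list. -/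
def efun : List R2 → ℕ → R2
  | [], j => if j = 0 then 1 else 0
  | _ :: _, 0 => 1
  | a :: L, j + 1 => efun L (j + 1) + a * efun L j

/-- The list `(-t_1, …, -t_r)`. -/
def negT (r : ℕ) : List R2 := (List.range r).map fun i => -Tv (i + 1)

/-- `h^r_j(-t)`: complete homogeneous for `r ≥ 0`, elementary `e^{-r}_j(-t)` for `r < 0`. -/
def hmt (r : ℤ) (j : ℕ) : R2 :=
  if 0 ≤ r then hfun (negT r.toNat) j else efun (negT (-r).toNat) j

/-- `c^r_p := Σ_{j=0}^p c_{p-j} h^r_j(-t)`. -/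
def cc (r p : ℤ) : R2 := ∑ j ∈ Finset.range (p.toNat + 1), Cv (p - j) * hmt r j

/-- `a^s_p := (1/2)c_p + Σ_{j=1}^p c_{p-j} h^s_j(-t)`. -/
def aa (s p : ℤ) : R2 :=
  C (1/2 : ℚ) * Cv p + ∑ j ∈ Finset.Icc 1 p.toNat, Cv (p - j) * hmt s j

/-- `e^s_s(-t) = (-t_1)⋯(-t_s)`. -/
def eprod (s : ℤ) : R2 := ∏ i ∈ Finset.range s.toNat, -Tv (i + 1)

/-- `ĉ^r_p := c^r_p + (2f_k - c_k)e^{p-k}_{p-k}(-t)` when `r = k - p < 0`, else `c^r_p`. -/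
def chat (k : ℕ) (r p : ℤ) : R2 :=
  if r = (k : ℤ) - p ∧ r < 0 then cc r p + (2 * fk - Cv k) * eprod (p - k) else cc r p

/-- `f̃_k := c_k - f_k`. -/
def ftil (k : ℕ) : R2 := Cv k - fk

/-- `f^s_k := f_k + Σ_{j=1}^k c_{k-j} h^s_j(-t)`. -/
def fks (k : ℕ) (s : ℤ) : R2 := fk + ∑ j ∈ Finset.Icc 1 k, Cv ((k : ℤ) - j) * hmt s j

/-- `f̃^s_k := c_k - 2f_k + f^s_k`. -/
def ftils (k : ℕ) (s : ℤ) : R2 := Cv k - 2 * fk + fks k s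

/-- Images of the variables under the automorphism `s_i` (depending on `k` via `s_0(f_k)`). -/
def sImgF (k : ℕ) : ℕ → ℕ ⊕ ℕ → R2
  | 0, Sum.inr j => if j = 1 then -Tv 2 else if j = 2 then -Tv 1 else Tv j
  | 0, Sum.inl p =>
      if p = 0 then fk - (Tv 1 + Tv 2) * cc 2 ((k : ℤ) - 1)
      else Cv p - 2 * (Tv 1 + Tv 2) *
        ∑ j ∈ Finset.range p, (-1 : R2) ^ j *
          (∑ a ∈ Finset.range (j + 1), Tv 1 ^ a * Tv 2 ^ (j - a)) * Cv ((p : ℤ) - 1 - j)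
  | i + 1, Sum.inr j =>
      if j = i + 1 then Tv (i + 2) else if j = i + 2 then Tv (i + 1) else Tv j
  | _ + 1, Sum.inl p => X (Sum.inl p)

/-- The ring automorphism `s_i` of `R2`. -/
def sA (k i : ℕ) : R2 →ₐ[ℚ] R2 := aeval (sImgF k i)

/-- The fraction field of `R2`. -/
abbrev KK : Type := FractionRing R2

/-- The canonical embedding of `R2` into its fraction field. -/
def toK : R2 →+* KK := algebraMap R2 KK

/-- The denominator `t_1 + t_2` (for `i = 0`) resp. `t_{i+1} - t_i` (for `i ≥ 1`). -/
def dden (i : ℕ) : R2 := if i = 0 then Tv 1 + Tv 2 else Tv (i + 1) - Tv i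

/-- The divided difference operator `∂_i`, with values in the fraction field. -/
def dd (k i : ℕ) (f : R2) : KK := (toK f - toK (sA k i f)) / toK (dden i)

-- ===== auxiliary lemmas =====


lemma Cv_neg {p : ℤ} (hp : p < 0) : Cv p = 0 := by simp [Cv, hp]

lemma Cv_zero : Cv 0 = 1 := by simp [Cv]

lemma hfun_zero (L : List R2) : hfun L 0 = 1 := by
  induction L with
  | nil => simp [hfun]
  | cons a L ih => simp [hfun, ih]

lemma efun_zero (L : List R2) : efun L 0 = 1 := by
  cases L with
  | nil => simp [efun]
  | cons a L => simp [efun]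

lemma hmt_zero (r : ℤ) : hmt r 0 = 1 := by
  unfold hmt; split
  · exact hfun_zero _
  · exact efun_zero _

lemma hfun_nil (j : ℕ) : hfun [] j = if j = 0 then 1 else 0 := rfl

lemma hfun_single (a : R2) (j : ℕ) : hfun [a] j = a ^ j := by
  show (∑ i ∈ Finset.range (j + 1), a ^ i * hfun [] (j - i)) = a ^ j
  rw [Finset.sum_eq_single j]
  · simp [hfun_nil]
  · intro i hi hne
    rw [Finset.mem_range] at hi
    rw [hfun_nil, if_neg, mul_zero]
    omega
  · intro h; exact absurd (Finset.self_mem_range_succ j) h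

lemma negT_zero : negT 0 = [] := rfl
lemma negT_one : negT 1 = [-Tv 1] := rfl
lemma negT_two : negT 2 = [-Tv 1, -Tv 2] := rfl

lemma hmt_zero' (j : ℕ) : hmt 0 j = if j = 0 then 1 else 0 := by
  simp [hmt, negT_zero, hfun_nil]

lemma hmt_one (j : ℕ) : hmt 1 j = (-Tv 1) ^ j := by
  have : ((1 : ℤ)).toNat = 1 := rfl
  simp [hmt, this, negT_one, hfun_single]

lemma hmt_two (j : ℕ) :
    hmt 2 j = ∑ i ∈ Finset.range (j + 1), (-Tv 1) ^ i * (-Tv 2) ^ (j - i) := by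
  have h2 : ((2 : ℤ)).toNat = 2 := rfl
  have : hmt 2 j = hfun [-Tv 1, -Tv 2] j := by rw [hmt, if_pos (by norm_num), h2, negT_two]
  rw [this]
  show (∑ i ∈ Finset.range (j + 1), (-Tv 1) ^ i * hfun [-Tv 2] (j - i)) = _
  exact Finset.sum_congr rfl fun i _ => by rw [hfun_single]

lemma hmt_m1 (j : ℕ) :
    hmt (-1) j = if j = 0 then 1 else if j = 1 then -Tv 1 else 0 := by
  have : hmt (-1) j = efun [-Tv 1] j := by rw [hmt, if_neg (by norm_num)]; rfl
  rw [this]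
  match j with
  | 0 => simp [efun]
  | 1 => show efun [] 1 + (-Tv 1) * efun [] 0 = _ ; simp [efun]
  | (j+2) => show efun [] (j+2) + (-Tv 1) * efun [] (j+1) = _ ; simp [efun]

lemma hmt_two_succ (j : ℕ) : hmt 2 (j+1) = (-Tv 1) * hmt 2 j + (-Tv 2) ^ (j+1) := by
  rw [hmt_two, hmt_two, Finset.sum_range_succ']
  have h1 : ∀ i ∈ Finset.range (j+1),
      (-Tv 1) ^ (i+1) * (-Tv 2) ^ (j+1-(i+1)) = (-Tv 1) * ((-Tv 1) ^ i * (-Tv 2) ^ (j-i)) := by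
    intro i hi
    have : j + 1 - (i+1) = j - i := by omega
    rw [this, pow_succ]; ring
  rw [Finset.sum_congr rfl h1, ← Finset.mul_sum]
  simp

lemma hmt_two_succ' (j : ℕ) : hmt 2 (j+1) = (-Tv 2) * hmt 2 j + (-Tv 1) ^ (j+1) := by
  rw [hmt_two, hmt_two, Finset.sum_range_succ]
  have h1 : ∀ i ∈ Finset.range (j+1),
      (-Tv 1) ^ i * (-Tv 2) ^ (j+1-i) = (-Tv 2) * ((-Tv 1) ^ i * (-Tv 2) ^ (j-i)) := by
    intro i hi
    rw [Finset.mem_range] at hi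
    have : j + 1 - i = (j - i) + 1 := by omega
    rw [this, pow_succ]; ring
  rw [Finset.sum_congr rfl h1, ← Finset.mul_sum]
  simp

lemma hmt_two_rec (j : ℕ) :
    hmt 2 (j+2) = -(Tv 1 + Tv 2) * hmt 2 (j+1) - Tv 1 * Tv 2 * hmt 2 j := by
  have h1 := hmt_two_succ (j+1)
  have h2 := hmt_two_succ j
  have h3 : (-Tv 2) ^ (j+1+1) = (-Tv 2) * (-Tv 2)^(j+1) := by rw [pow_succ]; ring
  linear_combination h1 + Tv 2 * h2 + h3

lemma hmt_two_one : hmt 2 1 = -(Tv 1 + Tv 2) := by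
  rw [hmt_two]
  rw [Finset.sum_range_succ, Finset.sum_range_one]
  simp

lemma hmt_two_alt (j : ℕ) :
    hmt 2 j = (-1)^j * ∑ a ∈ Finset.range (j + 1), Tv 1 ^ a * Tv 2 ^ (j - a) := by
  rw [hmt_two, Finset.mul_sum]
  refine Finset.sum_congr rfl fun a ha => ?_
  rw [Finset.mem_range] at ha
  have h : (-1 : R2)^j = (-1)^a * (-1)^(j-a) := by
    rw [← pow_add]; congr 1; omega
  rw [h, neg_pow (Tv 1), neg_pow (Tv 2)]; ring
lemma cc_neg (r : ℤ) {p : ℤ} (hp : p < 0) : cc r p = 0 := by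
  rw [cc]
  have : p.toNat = 0 := by omega
  rw [this, Finset.sum_range_one]
  simp [Cv_neg hp]

lemma cc_zero (r : ℤ) : cc r 0 = 1 := by
  rw [cc]
  norm_num [Finset.sum_range_one, Cv_zero, hmt_zero]

lemma cc_def' (r p : ℤ) :
    cc r p = ∑ j ∈ Finset.range (p.toNat + 1), Cv (p - j) * hmt r j := rfl

lemma cc_peel (r : ℤ) {p : ℤ} (hp : 1 ≤ p) :
    cc r p = Cv p + ∑ j ∈ Finset.range ((p-1).toNat + 1), Cv (p - 1 - j) * hmt r (j+1) := by
  rw [cc]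
  have h : p.toNat + 1 = ((p-1).toNat + 1) + 1 := by omega
  rw [h, Finset.sum_range_succ']
  rw [add_comm]
  congr 1
  · simp [hmt_zero]
  · refine Finset.sum_congr rfl fun j _ => ?_
    have : p - (↑(j+1) : ℤ) = p - 1 - j := by push_cast; ring
    rw [this]

lemma cc_m1_eq (p : ℤ) : cc (-1) p = Cv p - Tv 1 * Cv (p-1) := by
  rcases lt_trichotomy p 0 with h | h | h
  · rw [cc_neg _ h, Cv_neg h, Cv_neg (by omega : p - 1 < 0)]; ring
  · subst h
    rw [cc_zero, Cv_zero, Cv_neg (by norm_num : (0:ℤ) - 1 < 0)]; ring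
  · rw [cc_peel _ h]
    have hc : ∀ j ∈ Finset.range ((p-1).toNat + 1),
        Cv (p - 1 - j) * hmt (-1) (j+1) = if j = 0 then Cv (p-1) * (-Tv 1) else 0 := by
      intro j _
      rw [hmt_m1]
      rcases j with _ | j
      · norm_num
      · norm_num
    rw [Finset.sum_congr rfl hc, Finset.sum_ite_eq' _ 0 (fun _ => Cv (p-1) * (-Tv 1)),
      if_pos (by simp : 0 ∈ Finset.range ((p-1).toNat + 1))]
    ring

lemma cc_one_eq (p : ℤ) : cc 1 p = cc 2 p + Tv 2 * cc 2 (p-1) := by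
  rcases lt_trichotomy p 0 with h | h | h
  · rw [cc_neg _ h, cc_neg _ h, cc_neg _ (by omega : p - 1 < 0)]; ring
  · subst h
    rw [cc_zero, cc_zero, cc_neg _ (by norm_num : (0:ℤ) - 1 < 0)]; ring
  · have hs : ∑ j ∈ Finset.range ((p-1).toNat + 1), Cv (p - 1 - ↑j) * hmt 2 (j+1)
        = -Tv 2 * cc 2 (p-1)
          + ∑ j ∈ Finset.range ((p-1).toNat + 1), Cv (p - 1 - ↑j) * (-Tv 1)^(j+1) := by
      rw [cc_def' 2 (p-1), Finset.mul_sum, ← Finset.sum_add_distrib]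
      refine Finset.sum_congr rfl fun j _ => ?_
      rw [hmt_two_succ']; ring
    rw [cc_peel 1 h, cc_peel 2 h, hs]
    simp only [hmt_one]
    ring

lemma cc_two_rec (p : ℤ) :
    cc 2 p = Cv p - (Tv 1 + Tv 2) * cc 2 (p-1) - Tv 1 * Tv 2 * cc 2 (p-2) := by
  rcases lt_trichotomy p 0 with h | h | h
  · rw [cc_neg _ h, Cv_neg h, cc_neg _ (by omega : p - 1 < 0),
      cc_neg _ (by omega : p - 2 < 0)]; ring
  · subst h
    rw [cc_zero, Cv_zero, cc_neg _ (by norm_num : (0:ℤ) - 1 < 0),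
      cc_neg _ (by norm_num : (0:ℤ) - 2 < 0)]; ring
  · rcases (by omega : p = 1 ∨ 2 ≤ p) with h1 | h2
    · -- p = 1
      subst h1
      rw [cc_peel 2 (by norm_num : (1:ℤ) ≤ 1)]
      norm_num [Finset.sum_range_one, hmt_two_one, Cv_zero]
      rw [cc_neg 2 (by norm_num : (-1:ℤ) < 0)]
      rw [cc_zero]
      ring
    · -- 2 ≤ p
      have hp2 : (2:ℤ) ≤ p := h2
      rw [cc_peel 2 (by omega : (1:ℤ) ≤ p)]
      have hn : (p-1).toNat + 1 = ((p-2).toNat + 1) + 1 := by omega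
      rw [hn, Finset.sum_range_succ']
      have hsum : ∑ j ∈ Finset.range ((p-2).toNat + 1), Cv (p - 1 - ↑(j+1)) * hmt 2 ((j+1)+1)
          = -(Tv 1 + Tv 2) * (∑ j ∈ Finset.range ((p-2).toNat + 1), Cv (p - 2 - ↑j) * hmt 2 (j+1))
            - Tv 1 * Tv 2 * cc 2 (p-2) := by
        rw [cc_def' 2 (p-2), Finset.mul_sum, Finset.mul_sum, ← Finset.sum_sub_distrib]
        refine Finset.sum_congr rfl fun j _ => ?_
        have harg : p - 1 - (↑(j+1):ℤ) = p - 2 - ↑j := by push_cast; ring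
        rw [harg, show (j+1)+1 = j+2 from rfl, hmt_two_rec]; ring
      rw [hsum]
      have hc1 := cc_peel 2 (by omega : (1:ℤ) ≤ p - 1)
      rw [show p - 1 - 1 = p - 2 from by ring] at hc1
      rw [hc1]
      norm_num [hmt_two_one]
      ring

lemma cvEq (p : ℤ) :
    Cv p = cc 2 p + (Tv 1 + Tv 2) * cc 2 (p-1) + Tv 1 * Tv 2 * cc 2 (p-2) := by
  linear_combination -(cc_two_rec p)
lemma hhalfR : (C (1/2 : ℚ) : R2) * 2 = 1 := by
  rw [show (2 : R2) = C (2:ℚ) from (map_ofNat C 2).symm, ← C_mul]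
  norm_num

lemma sum_Icc_eq (n : ℕ) (f : ℕ → R2) :
    ∑ j ∈ Finset.Icc 1 n, f j = ∑ j ∈ Finset.range n, f (j+1) := by
  rw [← Finset.Ico_add_one_right_eq_Icc, Finset.sum_Ico_eq_sum_range]
  simp [add_comm]

lemma aa0_eq (p : ℤ) : aa 0 p = C (1/2 : ℚ) * Cv p := by
  rw [aa]
  have : ∑ j ∈ Finset.Icc 1 p.toNat, Cv (p - j) * hmt 0 j = 0 := by
    refine Finset.sum_eq_zero fun j hj => ?_
    rw [Finset.mem_Icc] at hj
    rw [hmt_zero', if_neg (by omega), mul_zero]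
  rw [this, add_zero]

lemma cc_one_split (p : ℤ) (hp : 0 ≤ p) :
    cc 1 p = Cv p + ∑ j ∈ Finset.Icc 1 p.toNat, Cv (p - j) * hmt 1 j := by
  rw [cc, Finset.sum_range_succ', sum_Icc_eq]
  rw [add_comm]
  congr 1
  simp [hmt_zero]

lemma aa1_eq (p : ℤ) (hp : 0 ≤ p) : aa 1 p = cc 1 p - C (1/2 : ℚ) * Cv p := by
  rw [aa, cc_one_split p hp]
  linear_combination Cv p * hhalfR

lemma aa1_eq' (p : ℤ) : aa 1 p = cc 2 p + Tv 2 * cc 2 (p-1) - C (1/2 : ℚ) * Cv p := by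
  rcases le_or_gt 0 p with hp | hp
  · rw [aa1_eq p hp, cc_one_eq]
  · have h0 : Cv p = 0 := Cv_neg hp
    have h1 : cc 2 p = 0 := cc_neg _ hp
    have h2 : cc 2 (p-1) = 0 := cc_neg _ (by omega)
    have h3 : aa 1 p = 0 := by
      rw [aa, h0]
      have : p.toNat = 0 := by omega
      simp [this]
    rw [h0, h1, h2, h3]; ring

lemma aa0_eq' (p : ℤ) : aa 0 p = C (1/2 : ℚ) * Cv p := aa0_eq p

lemma fks0_eq (k : ℕ) : fks k 0 = fk := by
  rw [fks]
  have : ∑ j ∈ Finset.Icc 1 k, Cv ((k:ℤ) - j) * hmt 0 j = 0 := by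
    refine Finset.sum_eq_zero fun j hj => ?_
    rw [Finset.mem_Icc] at hj
    rw [hmt_zero', if_neg (by omega), mul_zero]
  rw [this, add_zero]

lemma fks1_eq (k : ℕ) : fks k 1 = fk - Cv k + cc 1 k := by
  rw [fks, cc_one_split (k:ℤ) (by positivity)]
  rw [show ((k:ℤ)).toNat = k from Int.toNat_natCast k]
  ring

lemma ftils0_eq (k : ℕ) : ftils k 0 = Cv k - fk := by
  rw [ftils, fks0_eq]; ring

lemma ftils1_eq (k : ℕ) : ftils k 1 = cc 1 k - fk := by
  rw [ftils, fks1_eq]; ring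

lemma ftil_eq (k : ℕ) : ftil k = Cv k - fk := rfl

lemma eprod_one : eprod 1 = -Tv 1 := by
  rw [eprod]
  norm_num

lemma chat_eq (k : ℕ) : chat k (-1) ((k:ℤ) + 1) = Cv ((k:ℤ)+1) - 2 * Tv 1 * fk := by
  rw [chat, if_pos ⟨by ring, by norm_num⟩]
  rw [show (k:ℤ) + 1 - k = 1 from by ring, eprod_one, cc_m1_eq]
  rw [show (k:ℤ) + 1 - 1 = k from by ring]
  ring
lemma sA0_t1 (k : ℕ) : sA k 0 (Tv 1) = -Tv 2 := by
  rw [Tv, sA, aeval_X]; rfl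

lemma sA0_t2 (k : ℕ) : sA k 0 (Tv 2) = -Tv 1 := by
  rw [Tv, sA, aeval_X]; rfl

lemma sA0_fk (k : ℕ) : sA k 0 fk = fk - (Tv 1 + Tv 2) * cc 2 ((k:ℤ) - 1) := by
  rw [fk, sA, aeval_X]; rfl

lemma sA1_t1 (k : ℕ) : sA k 1 (Tv 1) = Tv 2 := by
  rw [Tv, sA, aeval_X]; rfl

lemma sA1_t2 (k : ℕ) : sA k 1 (Tv 2) = Tv 1 := by
  rw [Tv, sA, aeval_X]; rfl

lemma sA1_fk (k : ℕ) : sA k 1 fk = fk := by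
  rw [fk, sA, aeval_X]; rfl

lemma sA_C (k i : ℕ) (a : ℚ) : sA k i (C a) = C a := by
  rw [sA]
  simp [aeval_C, algebraMap_eq]

lemma sA1_Cv (k : ℕ) (p : ℤ) : sA k 1 (Cv p) = Cv p := by
  rcases lt_trichotomy p 0 with h | h | h
  · rw [Cv_neg h, map_zero]
  · subst h; rw [Cv_zero, map_one]
  · rw [Cv, if_neg (by omega), if_neg (by omega), sA, aeval_X]
    rfl
lemma sA0_Cv (k : ℕ) (p : ℤ) :
    sA k 0 (Cv p) = Cv p - 2 * (Tv 1 + Tv 2) * cc 2 (p-1) := by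
  rcases lt_trichotomy p 0 with h | h | h
  · rw [Cv_neg h, map_zero, cc_neg _ (by omega : p - 1 < 0)]; ring
  · subst h
    rw [Cv_zero, map_one, cc_neg _ (by norm_num : (0:ℤ) - 1 < 0)]; ring
  · have hp0 : p.toNat ≠ 0 := by omega
    rw [Cv, if_neg (by omega), if_neg (by omega), sA, aeval_X]
    simp only [sImgF, if_neg hp0]
    have hcast : ((p.toNat : ℤ)) = p := Int.toNat_of_nonneg (by omega)
    rw [hcast]
    have hsum : (∑ j ∈ Finset.range p.toNat,
        (-1:R2)^j * (∑ a ∈ Finset.range (j+1), Tv 1 ^ a * Tv 2 ^ (j-a)) * Cv (p - 1 - j))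
        = cc 2 (p-1) := by
      rw [cc_def' 2 (p-1), show (p-1).toNat + 1 = p.toNat from by omega]
      refine Finset.sum_congr rfl fun j _ => ?_
      rw [hmt_two_alt]; ring
    rw [hsum, Cv, if_neg (by omega), if_neg (by omega)]

lemma sA0_cc2_aux (k : ℕ) : ∀ n : ℕ, ∀ q : ℤ, q.toNat ≤ n → sA k 0 (cc 2 q) = cc 2 q := by
  intro n
  induction n with
  | zero =>
    intro q hq
    rcases lt_or_ge q 0 with h | h
    · rw [cc_neg _ h, map_zero]
    · have : q = 0 := by omega
      subst this
      rw [cc_zero, map_one]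
  | succ n ih =>
    intro q hq
    rcases le_or_gt q.toNat n with h | h
    · exact ih q h
    · have h1 : (1:ℤ) ≤ q := by omega
      rw [cc_two_rec q, map_sub, map_sub, map_mul, map_mul, map_mul, map_add,
        sA0_Cv, sA0_t1, sA0_t2, ih (q-1) (by omega), ih (q-2) (by omega)]
      ring

lemma sA0_cc2 (k : ℕ) (q : ℤ) : sA k 0 (cc 2 q) = cc 2 q :=
  sA0_cc2_aux k q.toNat q le_rfl

lemma sA1_cc2_aux (k : ℕ) : ∀ n : ℕ, ∀ q : ℤ, q.toNat ≤ n → sA k 1 (cc 2 q) = cc 2 q := by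
  intro n
  induction n with
  | zero =>
    intro q hq
    rcases lt_or_ge q 0 with h | h
    · rw [cc_neg _ h, map_zero]
    · have : q = 0 := by omega
      subst this
      rw [cc_zero, map_one]
  | succ n ih =>
    intro q hq
    rcases le_or_gt q.toNat n with h | h
    · exact ih q h
    · rw [cc_two_rec q, map_sub, map_sub, map_mul, map_mul, map_mul, map_add,
        sA1_Cv, sA1_t1, sA1_t2, ih (q-1) (by omega), ih (q-2) (by omega)]
      ring

lemma sA1_cc2 (k : ℕ) (q : ℤ) : sA k 1 (cc 2 q) = cc 2 q :=
  sA1_cc2_aux k q.toNat q le_rfl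

lemma sA0_cc1 (k : ℕ) (q : ℤ) :
    sA k 0 (cc 1 q) = cc 2 q - Tv 1 * cc 2 (q-1) := by
  rw [cc_one_eq, map_add, map_mul, sA0_t2, sA0_cc2, sA0_cc2]
  ring

lemma sA1_cc1 (k : ℕ) (q : ℤ) :
    sA k 1 (cc 1 q) = cc 2 q + Tv 1 * cc 2 (q-1) := by
  rw [cc_one_eq, map_add, map_mul, sA1_t2, sA1_cc2, sA1_cc2]
lemma dden_zero : dden 0 = Tv 1 + Tv 2 := rfl
lemma dden_one : dden 1 = Tv 2 - Tv 1 := rfl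

lemma dden0_ne : dden 0 ≠ 0 := by
  rw [dden_zero]
  intro h
  have := congrArg (eval fun v => if v = Sum.inr 1 then (1:ℚ) else 0) h
  simp [Tv] at this

lemma dden1_ne : dden 1 ≠ 0 := by
  rw [dden_one]
  intro h
  have := congrArg (eval fun v => if v = Sum.inr 2 then (1:ℚ) else 0) h
  simp [Tv] at this

lemma toK_inj : Function.Injective toK :=
  IsFractionRing.injective R2 KK

lemma toK_ne {f : R2} (h : f ≠ 0) : toK f ≠ 0 := by
  intro h0
  exact h (toK_inj (by rw [h0, map_zero]))

lemma dd_eq' (k i : ℕ) (f g : R2) (hd : dden i ≠ 0)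
    (h : toK f - toK (sA k i f) = toK (dden i) * toK g) : dd k i f = toK g := by
  rw [dd, h, mul_div_cancel_left₀ _ (toK_ne hd)]

lemma toK_half : toK (C (1/2 : ℚ)) = 1/2 := by
  have h2 : (toK (C (1/2 : ℚ))) * 2 = 1 := by
    rw [show (2 : KK) = toK 2 from (map_ofNat toK 2).symm, ← map_mul, hhalfR, map_one]
  have h2ne : (2:KK) ≠ 0 := by
    rw [show (2:KK) = toK 2 from (map_ofNat toK 2).symm]
    exact toK_ne (by norm_num)
  rw [eq_div_iff h2ne, h2]

set_option maxHeartbeats 2000000 in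
theorem statement12 (k : ℕ) (hk : 1 ≤ k) (p q : ℤ) :
    dd k 0 (cc (-1) p * aa 0 q) =
      toK (2 * (aa 1 (p - 1) * cc 2 q + aa 1 p * cc 2 (q - 1)) - 2 * aa 1 (p - 1) * aa 1 q) ∧
    dd k 0 (cc (-1) p * ftils k 0) =
      toK (2 * (aa 1 (p - 1) * cc 2 k + aa 1 p * cc 2 ((k : ℤ) - 1)) -
        2 * aa 1 (p - 1) * fks k 1) ∧
    dd k 0 (chat k (-1) ((k : ℤ) + 1) * aa 0 q) =
      toK (2 * (ftils k 1 * cc 2 q + aa 1 ((k : ℤ) + 1) * cc 2 (q - 1)) -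
        2 * ftils k 1 * aa 1 q) ∧
    dd k 0 (chat k (-1) ((k : ℤ) + 1) * ftils k 0) =
      toK (2 * (ftils k 1 * cc 2 k + aa 1 ((k : ℤ) + 1) * cc 2 ((k : ℤ) - 1)) -
        2 * ftils k 1 * fks k 1) ∧
    dd k 1 (cc (-1) p * aa 1 q) =
      toK (2 * (aa 0 (p - 1) * cc 2 q + aa 0 p * cc 2 (q - 1)) - 2 * aa 0 (p - 1) * aa 0 q) ∧
    dd k 1 (cc (-1) p * fks k 1) =
      toK (2 * (aa 0 (p - 1) * cc 2 k + aa 0 p * cc 2 ((k : ℤ) - 1)) -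
        2 * aa 0 (p - 1) * ftil k) ∧
    dd k 1 (chat k (-1) ((k : ℤ) + 1) * aa 1 q) =
      toK (2 * (fks k 0 * cc 2 q + aa 0 ((k : ℤ) + 1) * cc 2 (q - 1)) - 2 * fk * aa 0 q) ∧
    dd k 1 (chat k (-1) ((k : ℤ) + 1) * fks k 1) =
      toK (2 * (fks k 0 * cc 2 k + aa 0 ((k : ℤ) + 1) * cc 2 ((k : ℤ) - 1)) -
        2 * fk * ftil k) := by
  have hnorm1 : ∀ a : ℤ, a - 1 - 1 = a - 2 := fun a => by ring
  have hnorm2 : ∀ a : ℤ, a - 1 - 2 = a - 3 := fun a => by ring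
  have hnorm3 : ∀ a : ℤ, a + 1 - 1 = a := fun a => by ring
  have hnorm4 : ∀ a : ℤ, a + 1 - 2 = a - 1 := fun a => by ring
  refine ⟨?_, ?_, ?_, ?_, ?_, ?_, ?_, ?_⟩
  · apply dd_eq' k 0 _ _ dden0_ne
    rw [dden_zero]
    simp only [cc_m1_eq, aa0_eq, aa1_eq', ftils0_eq, ftils1_eq, ftil_eq, fks0_eq, fks1_eq,
      chat_eq, cc_one_eq, cvEq, hnorm1, hnorm2, hnorm3, hnorm4]
    simp only [map_sub, map_add, map_mul, map_neg, map_ofNat, sA0_cc2, sA0_t1, sA0_t2,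
      sA0_fk, sA_C, hnorm1, hnorm2, hnorm3, hnorm4, toK_half]
    ring
  · apply dd_eq' k 0 _ _ dden0_ne
    rw [dden_zero]
    simp only [cc_m1_eq, aa0_eq, aa1_eq', ftils0_eq, ftils1_eq, ftil_eq, fks0_eq, fks1_eq,
      chat_eq, cc_one_eq, cvEq, hnorm1, hnorm2, hnorm3, hnorm4]
    simp only [map_sub, map_add, map_mul, map_neg, map_ofNat, sA0_cc2, sA0_t1, sA0_t2,
      sA0_fk, sA_C, hnorm1, hnorm2, hnorm3, hnorm4, toK_half]
    ring
  · apply dd_eq' k 0 _ _ dden0_ne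
    rw [dden_zero]
    simp only [cc_m1_eq, aa0_eq, aa1_eq', ftils0_eq, ftils1_eq, ftil_eq, fks0_eq, fks1_eq,
      chat_eq, cc_one_eq, cvEq, hnorm1, hnorm2, hnorm3, hnorm4]
    simp only [map_sub, map_add, map_mul, map_neg, map_ofNat, sA0_cc2, sA0_t1, sA0_t2,
      sA0_fk, sA_C, hnorm1, hnorm2, hnorm3, hnorm4, toK_half]
    ring
  · apply dd_eq' k 0 _ _ dden0_ne
    rw [dden_zero]
    simp only [cc_m1_eq, aa0_eq, aa1_eq', ftils0_eq, ftils1_eq, ftil_eq, fks0_eq, fks1_eq,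
      chat_eq, cc_one_eq, cvEq, hnorm1, hnorm2, hnorm3, hnorm4]
    simp only [map_sub, map_add, map_mul, map_neg, map_ofNat, sA0_cc2, sA0_t1, sA0_t2,
      sA0_fk, sA_C, hnorm1, hnorm2, hnorm3, hnorm4, toK_half]
    ring
  · apply dd_eq' k 1 _ _ dden1_ne
    rw [dden_one]
    simp only [cc_m1_eq, aa0_eq, aa1_eq', ftils0_eq, ftils1_eq, ftil_eq, fks0_eq, fks1_eq,
      chat_eq, cc_one_eq, cvEq, hnorm1, hnorm2, hnorm3, hnorm4]
    simp only [map_sub, map_add, map_mul, map_neg, map_ofNat, sA1_cc2, sA1_t1, sA1_t2,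
      sA1_fk, sA_C, hnorm1, hnorm2, hnorm3, hnorm4, toK_half]
    ring
  · apply dd_eq' k 1 _ _ dden1_ne
    rw [dden_one]
    simp only [cc_m1_eq, aa0_eq, aa1_eq', ftils0_eq, ftils1_eq, ftil_eq, fks0_eq, fks1_eq,
      chat_eq, cc_one_eq, cvEq, hnorm1, hnorm2, hnorm3, hnorm4]
    simp only [map_sub, map_add, map_mul, map_neg, map_ofNat, sA1_cc2, sA1_t1, sA1_t2,
      sA1_fk, sA_C, hnorm1, hnorm2, hnorm3, hnorm4, toK_half]
    ring
  · apply dd_eq' k 1 _ _ dden1_ne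
    rw [dden_one]
    simp only [cc_m1_eq, aa0_eq, aa1_eq', ftils0_eq, ftils1_eq, ftil_eq, fks0_eq, fks1_eq,
      chat_eq, cc_one_eq, cvEq, hnorm1, hnorm2, hnorm3, hnorm4]
    simp only [map_sub, map_add, map_mul, map_neg, map_ofNat, sA1_cc2, sA1_t1, sA1_t2,
      sA1_fk, sA_C, hnorm1, hnorm2, hnorm3, hnorm4, toK_half]
    ring
  · apply dd_eq' k 1 _ _ dden1_ne
    rw [dden_one]
    simp only [cc_m1_eq, aa0_eq, aa1_eq', ftils0_eq, ftils1_eq, ftil_eq, fks0_eq, fks1_eq,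
      chat_eq, cc_one_eq, cvEq, hnorm1, hnorm2, hnorm3, hnorm4]
    simp only [map_sub, map_add, map_mul, map_neg, map_ofNat, sA1_cc2, sA1_t1, sA1_t2,
      sA1_fk, sA_C, hnorm1, hnorm2, hnorm3, hnorm4, toK_half]
    ring
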